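/- Fix β > 1. There exists a constant M(β) such that for every function f : [0,∞) → ℝ with ‖f‖₂ := sup_{x≥0} |f(x)|/(1+x²) finite, and every n ≥ 1, one has sup_{x≥0} |W_n^{(β)}(f;x)|/(1+x²) ≤ M(β)·‖f‖₂; that is, the Wright operators are uniformly bounded on the weighted space with weight 1/(1+x²). -/

import Mathlib

noncomputable def wright (β z : ℝ) : ℝ :=
  ∑' k : ℕ, z ^ k / (k.factorial * Real.Gamma ((k : ℝ) + β))

noncomputable def W (β : ℝ) (n : ℕ) (f : ℝ → ℝ) (x : ℝ) : ℝ :=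
  (wright β (n * x))⁻¹ *
    ∑' k : ℕ, f (((k : ℝ) + β) / n) * (n * x) ^ k / (k.factorial * Real.Gamma ((k : ℝ) + β))

namespace WrightAux

/-- the basic weight term -/
noncomputable def w (b z : ℝ) (k : ℕ) : ℝ :=
  z ^ k / (k.factorial * Real.Gamma ((k : ℝ) + b))

lemma gamma_pos {b : ℝ} (hb : 0 < b) (k : ℕ) : 0 < Real.Gamma ((k : ℝ) + b) :=
  Real.Gamma_pos_of_pos (by positivity)

lemma w_nonneg {b z : ℝ} (hb : 0 < b) (hz : 0 ≤ z) (k : ℕ) : 0 ≤ w b z k := by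
  have := gamma_pos hb k
  have : (0:ℝ) < k.factorial := by positivity
  unfold w; positivity

lemma gamma_step {b : ℝ} (hb : 1 ≤ b) (k : ℕ) :
    Real.Gamma ((k : ℝ) + b) ≤ Real.Gamma ((k : ℝ) + 1 + b) := by
  have h : (k : ℝ) + 1 + b = ((k : ℝ) + b) + 1 := by ring
  have hkb : (0:ℝ) < (k : ℝ) + b := by positivity
  rw [h, Real.Gamma_add_one hkb.ne']
  have hΓ := gamma_pos (by linarith : (0:ℝ) < b) k
  nlinarith [Nat.cast_nonneg (α := ℝ) k]

lemma gamma_base_le {b : ℝ} (hb : 1 ≤ b) (k : ℕ) :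
    Real.Gamma b ≤ Real.Gamma ((k : ℝ) + b) := by
  induction k with
  | zero => simp
  | succ m ih =>
      have := gamma_step hb m
      have hc : ((m + 1 : ℕ) : ℝ) + b = (m : ℝ) + 1 + b := by push_cast; ring
      rw [hc]; linarith

lemma summable_w {b z : ℝ} (hb : 1 ≤ b) (hz : 0 ≤ z) : Summable (w b z) := by
  have hΓb : 0 < Real.Gamma b := Real.Gamma_pos_of_pos (by linarith)
  refine Summable.of_nonneg_of_le (w_nonneg (by linarith) hz)
    (fun k => ?_) ((Real.summable_pow_div_factorial z).mul_right (Real.Gamma b)⁻¹)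
  have hΓk := gamma_pos (by linarith : (0:ℝ) < b) k
  have h1 : w b z k = z ^ k / (k.factorial : ℝ) / Real.Gamma ((k:ℝ) + b) := by
    unfold w; rw [div_div]
  rw [h1, ← div_eq_mul_inv]
  have hnum : (0:ℝ) ≤ z ^ k / (k.factorial : ℝ) := by positivity
  exact div_le_div_of_nonneg_left hnum hΓb (gamma_base_le hb k)

lemma cast_le_two_pow (k : ℕ) : (k : ℝ) ≤ 2 ^ k := by
  exact_mod_cast (Nat.lt_two_pow_self (n := k)).le

lemma summable_kw {b z : ℝ} (hb : 1 ≤ b) (hz : 0 ≤ z) :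
    Summable (fun k : ℕ => (k : ℝ) * w b z k) := by
  have hΓb : 0 < Real.Gamma b := Real.Gamma_pos_of_pos (by linarith)
  refine Summable.of_nonneg_of_le
    (fun k => mul_nonneg (Nat.cast_nonneg k) (w_nonneg (by linarith) hz k))
    (fun k => ?_)
    (((Real.summable_pow_div_factorial (2 * z)).mul_right (Real.Gamma b)⁻¹))
  have hΓk := gamma_pos (by linarith : (0:ℝ) < b) k
  have hfac : (0:ℝ) < k.factorial := by positivity
  have h2 : (k : ℝ) * w b z k ≤ 2 ^ k * w b z k := by
    have := cast_le_two_pow k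
    exact mul_le_mul_of_nonneg_right this (w_nonneg (by linarith) hz k)
  refine h2.trans ?_
  have h3 : (2:ℝ) ^ k * w b z k = (2 * z) ^ k / (k.factorial : ℝ) / Real.Gamma ((k:ℝ) + b) := by
    unfold w; rw [mul_pow]; ring
  rw [h3, ← div_eq_mul_inv]
  have hnum : (0:ℝ) ≤ (2 * z) ^ k / (k.factorial : ℝ) := by positivity
  exact div_le_div_of_nonneg_left hnum hΓb (gamma_base_le hb k)

lemma summable_k2w {b z : ℝ} (hb : 1 ≤ b) (hz : 0 ≤ z) :
    Summable (fun k : ℕ => (k : ℝ) ^ 2 * w b z k) := by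
  have hΓb : 0 < Real.Gamma b := Real.Gamma_pos_of_pos (by linarith)
  refine Summable.of_nonneg_of_le
    (fun k => mul_nonneg (by positivity) (w_nonneg (by linarith) hz k))
    (fun k => ?_)
    (((Real.summable_pow_div_factorial (4 * z)).mul_right (Real.Gamma b)⁻¹))
  have hΓk := gamma_pos (by linarith : (0:ℝ) < b) k
  have hfac : (0:ℝ) < k.factorial := by positivity
  have h2 : (k : ℝ) ^ 2 * w b z k ≤ 4 ^ k * w b z k := by
    have h := cast_le_two_pow k
    have hk0 : (0:ℝ) ≤ (k:ℝ) := Nat.cast_nonneg k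
    have : (k : ℝ) ^ 2 ≤ (2 ^ k : ℝ) ^ 2 := by nlinarith
    have h4 : ((2:ℝ) ^ k) ^ 2 = 4 ^ k := by
      rw [← pow_mul, mul_comm, pow_mul]; norm_num
    rw [h4] at this
    exact mul_le_mul_of_nonneg_right this (w_nonneg (by linarith) hz k)
  refine h2.trans ?_
  have h3 : (4:ℝ) ^ k * w b z k = (4 * z) ^ k / (k.factorial : ℝ) / Real.Gamma ((k:ℝ) + b) := by
    unfold w; rw [mul_pow]; ring
  rw [h3, ← div_eq_mul_inv]
  have hnum : (0:ℝ) ≤ (4 * z) ^ k / (k.factorial : ℝ) := by positivity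
  exact div_le_div_of_nonneg_left hnum hΓb (gamma_base_le hb k)

/-- the key termwise identity/inequality for the shifted series -/
lemma succ_term_le {b z : ℝ} (hb : 1 ≤ b) (hz : 0 ≤ z) (k : ℕ) :
    ((k + 1 : ℕ) : ℝ) * w b z (k + 1) ≤ z * w b z k := by
  have hΓk := gamma_pos (by linarith : (0:ℝ) < b) k
  have hΓk1 := gamma_pos (by linarith : (0:ℝ) < b) (k + 1)
  have hfac : (0:ℝ) < k.factorial := by positivity
  have heq : ((k + 1 : ℕ) : ℝ) * w b z (k + 1)
      = z * (z ^ k / (k.factorial * Real.Gamma (((k + 1 : ℕ) : ℝ) + b))) := by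
    unfold w
    rw [Nat.factorial_succ, pow_succ]
    push_cast
    field_simp
  rw [heq]
  have hmono : Real.Gamma ((k : ℝ) + b) ≤ Real.Gamma (((k + 1 : ℕ) : ℝ) + b) := by
    have := gamma_step hb k
    have hc : ((k + 1 : ℕ) : ℝ) + b = (k : ℝ) + 1 + b := by push_cast; ring
    rw [hc]; linarith
  have : z ^ k / (k.factorial * Real.Gamma (((k + 1 : ℕ) : ℝ) + b))
      ≤ z ^ k / (k.factorial * Real.Gamma ((k : ℝ) + b)) := by
    apply div_le_div_of_nonneg_left (by positivity) (by positivity)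
    exact mul_le_mul_of_nonneg_left hmono hfac.le
  exact mul_le_mul_of_nonneg_left this hz

lemma moment1 {b z : ℝ} (hb : 1 ≤ b) (hz : 0 ≤ z) :
    ∑' k : ℕ, (k : ℝ) * w b z k ≤ z * ∑' k : ℕ, w b z k := by
  have hsum := summable_kw hb hz
  rw [Summable.tsum_eq_zero_add hsum]
  simp only [Nat.cast_zero, zero_mul, zero_add]
  rw [← tsum_mul_left]
  refine Summable.tsum_le_tsum (fun k => succ_term_le hb hz k)
    ?_ ((summable_w hb hz).mul_left z)
  exact (summable_nat_add_iff 1).mpr hsum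

lemma w_shift_le {b z : ℝ} (hb : 1 ≤ b) (hz : 0 ≤ z) (k : ℕ) :
    w (b + 1) z k ≤ w b z k := by
  have hΓk := gamma_pos (by linarith : (0:ℝ) < b) k
  have hfac : (0:ℝ) < k.factorial := by positivity
  unfold w
  apply div_le_div_of_nonneg_left (by positivity) (by positivity)
  have hc : (k : ℝ) + (b + 1) = (k : ℝ) + 1 + b := by ring
  rw [hc]
  exact mul_le_mul_of_nonneg_left (gamma_step hb k) hfac.le

lemma moment2 {b z : ℝ} (hb : 1 ≤ b) (hz : 0 ≤ z) :
    ∑' k : ℕ, (k : ℝ) ^ 2 * w b z k ≤ (z ^ 2 + z) * ∑' k : ℕ, w b z k := by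
  have hb1 : (1:ℝ) ≤ b + 1 := by linarith
  have hsum := summable_k2w hb hz
  rw [Summable.tsum_eq_zero_add hsum]
  simp only [Nat.cast_zero, ne_eq, OfNat.ofNat_ne_zero, not_false_eq_true, zero_pow, zero_mul,
    zero_add]
  -- termwise : ((k+1):ℝ)^2 * w b z (k+1) = z * (((k:ℝ)+1) * w (b+1) z k)
  have hterm : ∀ k : ℕ, ((k + 1 : ℕ) : ℝ) ^ 2 * w b z (k + 1)
      = z * (((k : ℝ) + 1) * w (b + 1) z k) := by
    intro k
    have hΓk1 := gamma_pos (by linarith : (0:ℝ) < b) (k + 1)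
    have hfac : (0:ℝ) < k.factorial := by positivity
    unfold w
    rw [Nat.factorial_succ, pow_succ]
    have hc : ((k + 1 : ℕ) : ℝ) + b = (k : ℝ) + (b + 1) := by push_cast; ring
    rw [hc] at hΓk1 ⊢
    push_cast
    field_simp
    ring
  calc ∑' k : ℕ, ((k + 1 : ℕ) : ℝ) ^ 2 * w b z (k + 1)
      = ∑' k : ℕ, z * (((k : ℝ) + 1) * w (b + 1) z k) := by
        exact tsum_congr hterm
    _ = z * ∑' k : ℕ, ((k : ℝ) + 1) * w (b + 1) z k := tsum_mul_left
    _ = z * (∑' k : ℕ, (k : ℝ) * w (b + 1) z k + ∑' k : ℕ, w (b + 1) z k) := by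
        congr 1
        rw [← Summable.tsum_add (summable_kw hb1 hz) (summable_w hb1 hz)]
        exact tsum_congr fun k => by ring
    _ ≤ z * (z * ∑' k : ℕ, w (b + 1) z k + ∑' k : ℕ, w (b + 1) z k) := by
        apply mul_le_mul_of_nonneg_left _ hz
        have := moment1 hb1 hz
        linarith
    _ = (z ^ 2 + z) * ∑' k : ℕ, w (b + 1) z k := by ring
    _ ≤ (z ^ 2 + z) * ∑' k : ℕ, w b z k := by
        apply mul_le_mul_of_nonneg_left _ (by positivity)
        exact Summable.tsum_le_tsum (w_shift_le hb hz) (summable_w hb1 hz) (summable_w hb hz)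

lemma wright_pos {b z : ℝ} (hb : 1 ≤ b) (hz : 0 ≤ z) : 0 < wright b z := by
  have : wright b z = ∑' k : ℕ, w b z k := rfl
  rw [this]
  refine Summable.tsum_pos (summable_w hb hz) (w_nonneg (by linarith) hz) 0 ?_
  have hΓ := gamma_pos (by linarith : (0:ℝ) < b) 0
  unfold w
  simp only [pow_zero, Nat.factorial_zero, Nat.cast_one, one_mul]
  positivity

end WrightAux

set_option maxHeartbeats 1000000 in
open WrightAux in
theorem stmt_13 (β : ℝ) (hβ : 1 < β) :
    ∃ M > 0, ∀ f : ℝ → ℝ, ∀ A : ℝ, 0 ≤ A →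
      (∀ t : ℝ, 0 ≤ t → |f t| ≤ A * (1 + t ^ 2)) →
      ∀ n : ℕ, 1 ≤ n → ∀ x : ℝ, 0 ≤ x →
        |W β n f x| / (1 + x ^ 2) ≤ M * A := by
  have hb : (1:ℝ) ≤ β := hβ.le
  refine ⟨β ^ 2 + 2 * β + 3, by nlinarith, ?_⟩
  intro f A hA hf n hn x hx
  set M : ℝ := β ^ 2 + 2 * β + 3 with hM
  have hN : (1:ℝ) ≤ (n : ℝ) := by exact_mod_cast hn
  have hN0 : (0:ℝ) < (n : ℝ) := by linarith
  set N : ℝ := (n : ℝ) with hNdef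
  set z : ℝ := N * x with hzdef
  have hz : 0 ≤ z := by positivity
  -- the sums
  set S0 : ℝ := ∑' k : ℕ, w β z k with hS0
  set S1 : ℝ := ∑' k : ℕ, (k : ℝ) * w β z k with hS1
  set S2 : ℝ := ∑' k : ℕ, (k : ℝ) ^ 2 * w β z k with hS2
  have hS0pos : 0 < S0 := wright_pos hb hz
  have hS1nn : 0 ≤ S1 :=
    tsum_nonneg fun k => mul_nonneg (Nat.cast_nonneg k) (w_nonneg (by linarith) hz k)
  have hS2nn : 0 ≤ S2 :=
    tsum_nonneg fun k => mul_nonneg (by positivity) (w_nonneg (by linarith) hz k)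
  have hm1 : S1 ≤ z * S0 := moment1 hb hz
  have hm2 : S2 ≤ (z ^ 2 + z) * S0 := moment2 hb hz
  -- the dominating series
  set h : ℕ → ℝ := fun k => A * (1 + (((k : ℝ) + β) / N) ^ 2) * w β z k with hh
  have hrepr : ∀ k : ℕ, h k = A * w β z k + (A / N ^ 2) * ((k : ℝ) ^ 2 * w β z k)
      + (2 * β * A / N ^ 2) * ((k : ℝ) * w β z k) + (β ^ 2 * A / N ^ 2) * w β z k := by
    intro k
    have hN0' : N ≠ 0 := hN0.ne'
    simp only [hh]
    field_simp
    ring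
  have hsum0 := summable_w hb hz
  have hsum1 := summable_kw hb hz
  have hsum2 := summable_k2w hb hz
  have hsumh : Summable h := by
    rw [show h = fun k => A * w β z k + (A / N ^ 2) * ((k : ℝ) ^ 2 * w β z k)
      + (2 * β * A / N ^ 2) * ((k : ℝ) * w β z k) + (β ^ 2 * A / N ^ 2) * w β z k
      from funext hrepr]
    exact (((hsum0.mul_left A).add (hsum2.mul_left _)).add (hsum1.mul_left _)).add
      (hsum0.mul_left _)
  have hsumh_eq : ∑' k, h k = A * S0 + (A / N ^ 2) * S2 + (2 * β * A / N ^ 2) * S1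
      + (β ^ 2 * A / N ^ 2) * S0 := by
    rw [tsum_congr hrepr,
      Summable.tsum_add (((hsum0.mul_left A).add (hsum2.mul_left _)).add (hsum1.mul_left _))
        (hsum0.mul_left _),
      Summable.tsum_add ((hsum0.mul_left A).add (hsum2.mul_left _)) (hsum1.mul_left _),
      Summable.tsum_add (hsum0.mul_left A) (hsum2.mul_left _),
      tsum_mul_left, tsum_mul_left, tsum_mul_left, tsum_mul_left]
  -- bound the dominating sum
  have hxN : x / N ≤ x := div_le_self hx hN
  have hNsq : (0:ℝ) < N ^ 2 := by positivity
  have h1 : (1 / N ^ 2) * S2 ≤ x ^ 2 * S0 + x * S0 := by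
    have e1 : (1 / N ^ 2) * ((z ^ 2 + z) * S0) = x ^ 2 * S0 + (x / N) * S0 := by
      rw [hzdef]; field_simp
    have := mul_le_mul_of_nonneg_left hm2 (le_of_lt (by positivity : (0:ℝ) < 1 / N ^ 2))
    rw [e1] at this
    have : (1 / N ^ 2) * S2 ≤ x ^ 2 * S0 + (x / N) * S0 := this
    nlinarith [mul_le_mul_of_nonneg_right hxN hS0pos.le]
  have h2 : (2 * β / N ^ 2) * S1 ≤ 2 * β * x * S0 := by
    have hc : (0:ℝ) ≤ 2 * β / N ^ 2 := by positivity
    have := mul_le_mul_of_nonneg_left hm1 hc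
    have e1 : (2 * β / N ^ 2) * (z * S0) = 2 * β * ((x / N) * S0) := by
      rw [hzdef]; field_simp
    rw [e1] at this
    nlinarith [mul_le_mul_of_nonneg_right hxN hS0pos.le]
  have h3 : (β ^ 2 / N ^ 2) * S0 ≤ β ^ 2 * S0 := by
    have hinv : β ^ 2 / N ^ 2 ≤ β ^ 2 := by
      apply div_le_self (by positivity)
      nlinarith
    exact mul_le_mul_of_nonneg_right hinv hS0pos.le
  have hscal : 1 + x ^ 2 + x + 2 * β * x + β ^ 2 ≤ M * (1 + x ^ 2) := by
    rw [hM]; nlinarith [sq_nonneg (x - 1), sq_nonneg x]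
  have hkey : S0 + (1 / N ^ 2) * S2 + (2 * β / N ^ 2) * S1 + (β ^ 2 / N ^ 2) * S0
      ≤ M * (1 + x ^ 2) * S0 := by
    have h4 := mul_le_mul_of_nonneg_right hscal hS0pos.le
    have e : (1 + x ^ 2 + x + 2 * β * x + β ^ 2) * S0
        = S0 + x ^ 2 * S0 + x * S0 + 2 * β * x * S0 + β ^ 2 * S0 := by ring
    rw [e] at h4
    clear_value M N z S0 S1 S2
    linarith only [h1, h2, h3, h4]
  have hsumh_le : ∑' k, h k ≤ A * (M * (1 + x ^ 2) * S0) := by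
    rw [hsumh_eq]
    calc A * S0 + (A / N ^ 2) * S2 + (2 * β * A / N ^ 2) * S1 + (β ^ 2 * A / N ^ 2) * S0
        = A * (S0 + (1 / N ^ 2) * S2 + (2 * β / N ^ 2) * S1 + (β ^ 2 / N ^ 2) * S0) := by
          ring
      _ ≤ A * (M * (1 + x ^ 2) * S0) := mul_le_mul_of_nonneg_left hkey hA
  -- the numerator series of W
  set g : ℕ → ℝ := fun k =>
    f (((k : ℝ) + β) / N) * z ^ k / (k.factorial * Real.Gamma ((k : ℝ) + β)) with hg
  have hgh : ∀ k, |g k| ≤ h k := by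
    intro k
    have htk : (0:ℝ) ≤ ((k : ℝ) + β) / N := by positivity
    have hwnn := w_nonneg (by linarith : (0:ℝ) < β) hz k
    have e1 : g k = f (((k : ℝ) + β) / N) * w β z k := by
      simp only [hg, w, mul_div_assoc]
    rw [e1, abs_mul, abs_of_nonneg hwnn]
    have := hf _ htk
    simp only [hh]
    exact mul_le_mul_of_nonneg_right this hwnn
  have hsumabsg : Summable fun k => |g k| :=
    Summable.of_nonneg_of_le (fun k => abs_nonneg _) hgh hsumh
  have hsumg : Summable g := hsumabsg.of_abs
  have hT : |∑' k, g k| ≤ A * (M * (1 + x ^ 2) * S0) := by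
    calc |∑' k, g k| ≤ ∑' k, |g k| := by
          have hnorm : Summable fun k => ‖g k‖ := by simpa [Real.norm_eq_abs] using hsumabsg
          simpa [Real.norm_eq_abs] using norm_tsum_le_tsum_norm hnorm
      _ ≤ ∑' k, h k := Summable.tsum_le_tsum hgh hsumabsg hsumh
      _ ≤ A * (M * (1 + x ^ 2) * S0) := hsumh_le
  -- conclude
  have hφ : wright β z = S0 := rfl
  have hWeq : W β n f x = (S0)⁻¹ * ∑' k, g k := by
    simp only [W, hg, ← hφ, ← hzdef, hNdef]
    rfl
  have h1x : (0:ℝ) < 1 + x ^ 2 := by positivity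
  rw [div_le_iff₀ h1x, hWeq, abs_mul, abs_inv, abs_of_pos hS0pos]
  calc S0⁻¹ * |∑' k, g k| ≤ S0⁻¹ * (A * (M * (1 + x ^ 2) * S0)) :=
        mul_le_mul_of_nonneg_left hT (by positivity)
    _ = M * A * (1 + x ^ 2) := by field_simp
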